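/- arXiv:2506.16646 — 8 statements merged into one kernel-verified Lean document; each statement's English description precedes it below -/
import Mathlib

section
/- Proposition 1 (existence part): Suppose the measurement operators form a POVM, i.e. each A_i is Hermitian PSD and Σ_{i=1}^m A_i = I, and suppose the frequencies are generated by a density matrix ρ0, i.e. f_i = Re(tr(A_i ρ0)) for every i = 1,…,m. Then for every density matrix ρ with Re(tr(A_i ρ)) > 0 for every i with f_i > 0, one has L(ρ0) ≤ L(ρ); that is, ρ0 minimizes the negative log-likelihood over density matrices. -/
open Matrix BigOperators ComplexOrder

lemma psd_trace_re_nonneg {d : ℕ} {M : Matrix (Fin d) (Fin d) ℂ}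
    (hM : M.PosSemidef) : 0 ≤ M.trace.re := by
  have h : ∀ i, 0 ≤ (M i i).re := by
    intro i
    have := hM.dotProduct_mulVec_nonneg (Pi.single i 1)
    have h0 : star (Pi.single i 1) ⬝ᵥ M.mulVec (Pi.single i 1) = M i i := by
      simp [dotProduct, mulVec, Pi.single_apply, Finset.sum_ite_eq]
    rw [h0] at this
    exact (Complex.le_def.mp this).1.trans_eq (by simp)
  simpa [Matrix.trace, Matrix.diag, Complex.re_sum] using
    Finset.sum_nonneg (fun i _ => h i)

open scoped MatrixOrder in
lemma psd_trace_mul_re_nonneg {d : ℕ} {P Q : Matrix (Fin d) (Fin d) ℂ}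
    (hP : P.PosSemidef) (hQ : Q.PosSemidef) : 0 ≤ (P * Q).trace.re := by
  have hS : (CFC.sqrt P).PosSemidef := Matrix.nonneg_iff_posSemidef.mp (CFC.sqrt_nonneg P)
  have hsq : CFC.sqrt P * CFC.sqrt P = P :=
    CFC.sqrt_mul_sqrt_self P (Matrix.nonneg_iff_posSemidef.mpr hP)
  have key : (P * Q).trace = (CFC.sqrt P * Q * (CFC.sqrt P)ᴴ).trace := by
    rw [hS.isHermitian.eq]
    calc (P * Q).trace = (CFC.sqrt P * CFC.sqrt P * Q).trace := by rw [hsq]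
      _ = (CFC.sqrt P * (CFC.sqrt P * Q)).trace := by rw [mul_assoc]
      _ = (CFC.sqrt P * Q * CFC.sqrt P).trace := Matrix.trace_mul_comm _ _
  rw [key]
  exact psd_trace_re_nonneg (hQ.mul_mul_conjTranspose_same (CFC.sqrt P))

/-- Negative log-likelihood `L(ρ) = −Σ_i f_i · log(Re(tr(A_i ρ)))`. -/
noncomputable def negLogLik {d m : ℕ} (A : Fin m → Matrix (Fin d) (Fin d) ℂ)
    (f : Fin m → ℝ) (ρ : Matrix (Fin d) (Fin d) ℂ) : ℝ :=
  -∑ i, f i * Real.log ((A i * ρ).trace.re)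

/-- Proposition 1 (existence part): if the frequencies are generated by a density
matrix `ρ0` and the `A i` form a POVM, then `ρ0` minimizes `L` over density matrices. -/
theorem mle_existence {d m : ℕ} (hd : 1 ≤ d) (hm : 1 ≤ m)
    (A : Fin m → Matrix (Fin d) (Fin d) ℂ) (f : Fin m → ℝ)
    (hA : ∀ i, (A i).PosSemidef) (hAsum : ∑ i, A i = 1)
    (hf : ∀ i, 0 ≤ f i)
    (ρ0 : Matrix (Fin d) (Fin d) ℂ) (hρ0 : ρ0.PosSemidef) (hρ0tr : ρ0.trace = 1)
    (hdata : ∀ i, f i = ((A i * ρ0).trace).re) :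
    ∀ ρ : Matrix (Fin d) (Fin d) ℂ, ρ.PosSemidef → ρ.trace = 1 →
      (∀ i, 0 < f i → 0 < ((A i * ρ).trace).re) →
      negLogLik A f ρ0 ≤ negLogLik A f ρ := by
  intro ρ hρ hρtr hpos
  set p : Fin m → ℝ := fun i => ((A i * ρ).trace).re with hp
  -- sums of p and f are both 1
  have hsum : ∀ (σ : Matrix (Fin d) (Fin d) ℂ), σ.trace = 1 →
      ∑ i, ((A i * σ).trace).re = 1 := by
    intro σ hσ
    have : ∑ i, (A i * σ).trace = 1 := by
      rw [← Matrix.trace_sum, ← Finset.sum_mul, hAsum, one_mul, hσ]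
    calc ∑ i, ((A i * σ).trace).re = (∑ i, (A i * σ).trace).re := by
          rw [Complex.re_sum]
      _ = 1 := by rw [this]; simp
  have hsump : ∑ i, p i = 1 := hsum ρ hρtr
  have hsumf : ∑ i, f i = 1 := by
    simpa [← hdata] using hsum ρ0 hρ0tr
  -- termwise Gibbs inequality
  have key : ∀ i, f i * Real.log (p i) - f i * Real.log (f i) ≤ p i - f i := by
    intro i
    rcases eq_or_lt_of_le (hf i) with h0 | h0
    · simp only [← h0, zero_mul, sub_zero, sub_self]
      exact psd_trace_mul_re_nonneg (hA i) hρ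
    · have hpi : 0 < p i := hpos i h0
      have hlog : Real.log (p i / f i) ≤ p i / f i - 1 :=
        Real.log_le_sub_one_of_pos (div_pos hpi h0)
      rw [Real.log_div hpi.ne' h0.ne'] at hlog
      calc f i * Real.log (p i) - f i * Real.log (f i)
          = f i * (Real.log (p i) - Real.log (f i)) := by ring
        _ ≤ f i * (p i / f i - 1) := mul_le_mul_of_nonneg_left hlog h0.le
        _ = p i - f i := by field_simp
  have hsumkey : ∑ i, (f i * Real.log (p i) - f i * Real.log (f i)) ≤ 0 := by
    calc ∑ i, (f i * Real.log (p i) - f i * Real.log (f i))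
        ≤ ∑ i, (p i - f i) := Finset.sum_le_sum (fun i _ => key i)
      _ = 0 := by rw [Finset.sum_sub_distrib, hsump, hsumf, sub_self]
  simp only [negLogLik, neg_le_neg_iff, ← hdata]
  have := Finset.sum_sub_distrib (f := fun i => f i * Real.log (p i))
    (g := fun i => f i * Real.log (f i)) (s := Finset.univ)
  rw [this] at hsumkey
  linarith
end

section
/- Proposition 1 (uniqueness part): Suppose the measurement operators form a POVM, i.e. each A_i is Hermitian PSD and Σ_{i=1}^m A_i = I, that f_i = Re(tr(A_i ρ0)) for every i where ρ0 is a density matrix, and that the POVM is informationally complete, i.e. the real linear span of {A_1, …, A_m} is the whole real vector space of d × d Hermitian matrices. Then ρ0 is the unique minimizer of L over density matrices: any density matrix ρ with Re(tr(A_i ρ)) > 0 for every i with f_i > 0 and L(ρ) = L(ρ0) must equal ρ0. -/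
open Matrix BigOperators ComplexOrder

lemma psd_diag_nonneg {d : ℕ} {M : Matrix (Fin d) (Fin d) ℂ} (hM : M.PosSemidef) (i : Fin d) :
    0 ≤ M i i := by
  exact hM.diag_nonneg

open scoped MatrixOrder in
lemma psd_mul_trace_re_nonneg {d : ℕ} {A ρ : Matrix (Fin d) (Fin d) ℂ}
    (hA : A.PosSemidef) (hρ : ρ.PosSemidef) : 0 ≤ ((A * ρ).trace).re := by
  have hs := (CFC.sqrt_nonneg ρ).posSemidef
  have h1 : A * ρ = A * CFC.sqrt ρ * CFC.sqrt ρ := by rw [mul_assoc, CFC.sqrt_mul_sqrt_self ρ hρ.nonneg]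
  rw [h1, trace_mul_cycle]
  have : CFC.sqrt ρ * A * CFC.sqrt ρ = (CFC.sqrt ρ)ᴴ * A * CFC.sqrt ρ := by rw [hs.isHermitian.eq]
  rw [this] at *
  exact psd_trace_re_nonneg (hA.conjTranspose_mul_mul_same _)

/-- Proposition 1 (uniqueness part): with an informationally complete POVM and
frequencies generated by the density matrix `ρ0`, the state `ρ0` is the unique
minimizer of `L` over density matrices. -/
theorem mle_uniqueness {d m : ℕ} (hd : 1 ≤ d) (hm : 1 ≤ m)
    (A : Fin m → Matrix (Fin d) (Fin d) ℂ) (f : Fin m → ℝ)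
    (hA : ∀ i, (A i).PosSemidef) (hAsum : ∑ i, A i = 1)
    (hf : ∀ i, 0 ≤ f i)
    (ρ0 : Matrix (Fin d) (Fin d) ℂ) (hρ0 : ρ0.PosSemidef) (hρ0tr : ρ0.trace = 1)
    (hdata : ∀ i, f i = ((A i * ρ0).trace).re)
    (hIC : ((Submodule.span ℝ (Set.range A) : Submodule ℝ (Matrix (Fin d) (Fin d) ℂ)) :
        Set (Matrix (Fin d) (Fin d) ℂ)) = {B | B.IsHermitian}) :
    ∀ ρ : Matrix (Fin d) (Fin d) ℂ, ρ.PosSemidef → ρ.trace = 1 →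
      (∀ i, 0 < f i → 0 < ((A i * ρ).trace).re) →
      negLogLik A f ρ = negLogLik A f ρ0 →
      ρ = ρ0 := by
  intro ρ hρ hρtr hpos hL
  set q : Fin m → ℝ := fun i => ((A i * ρ).trace).re with hqdef
  have hq0 : ∀ i, 0 ≤ q i := fun i => psd_mul_trace_re_nonneg (hA i) hρ
  have hsumq : ∑ i, q i = 1 := by
    have h1 : ∑ i, (A i * ρ).trace = 1 := by
      rw [← Matrix.trace_sum, ← Finset.sum_mul, hAsum, one_mul, hρtr]
    calc ∑ i, q i = (∑ i, (A i * ρ).trace).re := by rw [Complex.re_sum]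
    _ = 1 := by rw [h1]; simp
  have hsumf : ∑ i, f i = 1 := by
    have h1 : ∑ i, (A i * ρ0).trace = 1 := by
      rw [← Matrix.trace_sum, ← Finset.sum_mul, hAsum, one_mul, hρ0tr]
    calc ∑ i, f i = (∑ i, (A i * ρ0).trace).re := by
          rw [Complex.re_sum]; exact Finset.sum_congr rfl fun i _ => hdata i
    _ = 1 := by rw [h1]; simp
  have hlog : ∑ i, f i * Real.log (q i) = ∑ i, f i * Real.log (f i) := by
    unfold negLogLik at hL
    have h2 := neg_inj.mp hL
    rw [h2]
    exact Finset.sum_congr rfl fun i _ => by rw [← hdata i]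
  have hD : ∀ i, f i - q i ≤ f i * (Real.log (f i) - Real.log (q i)) := by
    intro i
    rcases eq_or_lt_of_le (hf i) with h0 | hfi
    · rw [← h0]; simp; linarith [hq0 i]
    · have hqi := hpos i hfi
      have hl := Real.log_le_sub_one_of_pos (div_pos hqi hfi)
      rw [Real.log_div (ne_of_gt hqi) (ne_of_gt hfi)] at hl
      have h2 := mul_le_mul_of_nonneg_left hl hfi.le
      have hc : f i * (q i / f i - 1) = q i - f i := by field_simp
      rw [hc] at h2
      linarith [h2]
  have hDsum : ∑ i, (f i * (Real.log (f i) - Real.log (q i)) - (f i - q i)) = 0 := by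
    have he : ∀ i, f i * (Real.log (f i) - Real.log (q i)) - (f i - q i)
        = (f i * Real.log (f i) - f i * Real.log (q i)) - f i + q i := fun i => by ring
    simp only [he]
    rw [Finset.sum_add_distrib, Finset.sum_sub_distrib, Finset.sum_sub_distrib,
      hlog, hsumf, hsumq]
    ring
  have hzero : ∀ i ∈ Finset.univ,
      f i * (Real.log (f i) - Real.log (q i)) - (f i - q i) = 0 :=
    (Finset.sum_eq_zero_iff_of_nonneg (fun i _ => by linarith [hD i])).mp hDsum
  have hqf : ∀ i, q i = f i := by
    intro i
    have hz := hzero i (Finset.mem_univ i)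
    rcases eq_or_lt_of_le (hf i) with h0 | hfi
    · rw [← h0] at hz ⊢; simpa using hz
    · have hqi := hpos i hfi
      by_contra hne
      have hne' : q i / f i ≠ 1 := by
        intro h
        apply hne
        field_simp at h
        exact h
      have hl := Real.log_lt_sub_one_of_pos (div_pos hqi hfi) hne'
      rw [Real.log_div (ne_of_gt hqi) (ne_of_gt hfi)] at hl
      have h2 := mul_lt_mul_of_pos_left hl hfi
      have hc : f i * (q i / f i - 1) = q i - f i := by field_simp
      rw [hc] at h2
      linarith [hz]
  -- trace equality and informational completeness
  have hΔh : (ρ - ρ0).IsHermitian := hρ.isHermitian.sub hρ0.isHermitian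
  have hspan : (ρ - ρ0) ∈ Submodule.span ℝ (Set.range A) := by
    have : (ρ - ρ0) ∈ (↑(Submodule.span ℝ (Set.range A)) :
        Set (Matrix (Fin d) (Fin d) ℂ)) := by rw [hIC]; exact hΔh
    exact this
  have hφ : ∀ B ∈ Submodule.span ℝ (Set.range A), ((B * (ρ - ρ0)).trace).re = 0 := by
    intro B hB
    induction hB using Submodule.span_induction with
    | mem x hx =>
        obtain ⟨i, rfl⟩ := hx
        rw [mul_sub, Matrix.trace_sub, Complex.sub_re]
        have h1 := hqf i
        have h2 := hdata i
        rw [hqdef] at h1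
        simp only at h1
        linarith
    | zero => simp
    | add x y hx hy ihx ihy => rw [add_mul, Matrix.trace_add, Complex.add_re, ihx, ihy, add_zero]
    | smul a x hx ih => rw [Matrix.smul_mul, Matrix.trace_smul, Complex.smul_re, ih, smul_zero]
  have hzero2 : ((((ρ - ρ0)ᴴ) * (ρ - ρ0)).trace).re = 0 := by
    rw [hΔh.eq]; exact hφ _ hspan
  have key : (((ρ - ρ0)ᴴ * (ρ - ρ0)).trace).re
      = ∑ j, ∑ k, Complex.normSq ((ρ - ρ0) k j) := by
    rw [Matrix.trace, Complex.re_sum]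
    refine Finset.sum_congr rfl fun j _ => ?_
    rw [Matrix.diag_apply, Matrix.mul_apply, Complex.re_sum]
    refine Finset.sum_congr rfl fun k _ => ?_
    simp [Matrix.conjTranspose_apply, Complex.mul_re, Complex.normSq_apply]
    ring
  rw [key] at hzero2
  have hM0 : ρ - ρ0 = 0 := by
    ext k j
    have h1 := (Finset.sum_eq_zero_iff_of_nonneg
      (fun _ _ => Finset.sum_nonneg fun _ _ => Complex.normSq_nonneg _)).mp hzero2
      j (Finset.mem_univ j)
    have h2 := (Finset.sum_eq_zero_iff_of_nonneg
      (fun _ _ => Complex.normSq_nonneg _)).mp h1 k (Finset.mem_univ k)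
    simpa using Complex.normSq_eq_zero.mp h2
  exact sub_eq_zero.mp hM0
end

section
/- Theorem (unconstrained MLE equivalence): Set λ = Σ_{i=1}^m f_i and assume λ > 0. Let D be the set of Hermitian PSD matrices σ with Re(tr(A_i σ)) > 0 for every i with f_i > 0, and let D₁ = {σ ∈ D : tr(σ) = 1}. Then for ρ ∈ D the following are equivalent: (i) tr(ρ) = 1 and L(ρ) ≤ L(σ) for every σ ∈ D₁; (ii) L(ρ) + λ·Re(tr(ρ)) ≤ L(σ) + λ·Re(tr(σ)) for every σ ∈ D. That is, the trace-one constrained maximum-likelihood problem and the trace-penalized problem with multiplier λ = Σ f_i have exactly the same minimizers. -/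
open Matrix BigOperators ComplexOrder

section Aux

variable {d : ℕ}

lemma herm_trace_real {σ : Matrix (Fin d) (Fin d) ℂ} (h : σ.IsHermitian) :
    σ.trace = (σ.trace.re : ℂ) := by
  have h1 : σ.trace = star σ.trace := by
    conv_lhs => rw [← h.eq]
    exact Matrix.trace_conjTranspose σ
  have him : σ.trace.im = 0 := by
    have := congrArg Complex.im h1
    simp only [Complex.star_def, Complex.conj_im] at this
    linarith
  exact Complex.ext (by simp) (by simp [him])

lemma psd_smul {σ : Matrix (Fin d) (Fin d) ℂ} (h : σ.PosSemidef) {c : ℝ} (hc : 0 ≤ c) :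
    ((c : ℂ) • σ).PosSemidef := by
  constructor
  · unfold Matrix.IsHermitian
    rw [conjTranspose_smul, h.1.eq]
    simp
  · intro x
    have hc' : (0:ℂ) ≤ (c:ℂ) := by
      rw [Complex.le_def]; simp [hc]
    exact (h.smul hc').2 x

lemma herm_trace_eq_sum_eigen {σ : Matrix (Fin d) (Fin d) ℂ} (h : σ.IsHermitian) :
    σ.trace = ∑ i, (h.eigenvalues i : ℂ) := by
  conv_lhs => rw [h.spectral_theorem]
  rw [Unitary.conjStarAlgAut_apply, Matrix.trace_mul_cycle]
  have hU : (star (h.eigenvectorUnitary : Matrix (Fin d) (Fin d) ℂ)) *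
      (h.eigenvectorUnitary : Matrix (Fin d) (Fin d) ℂ) = 1 := h.eigenvectorUnitary.2.1
  rw [hU, one_mul, trace_diagonal]
  simp

lemma psd_trace_re_pos {σ : Matrix (Fin d) (Fin d) ℂ} (h : σ.PosSemidef) (hne : σ ≠ 0) :
    0 < σ.trace.re := by
  classical
  have hev := h.eigenvalues_nonneg
  have htr : σ.trace.re = ∑ i, h.1.eigenvalues i := by
    rw [herm_trace_eq_sum_eigen h.1]
    simp
  have hnn : 0 ≤ σ.trace.re := htr ▸ Finset.sum_nonneg (fun i _ => hev i)
  rcases lt_or_eq_of_le hnn with hlt | heq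
  · exact hlt
  · exfalso
    have hz : ∀ i ∈ Finset.univ, h.1.eigenvalues i = 0 := by
      apply (Finset.sum_eq_zero_iff_of_nonneg (fun i _ => hev i)).mp
      rw [← htr, ← heq]
    have : σ = 0 := by
      conv_lhs => rw [h.1.spectral_theorem]
      have hfun : (RCLike.ofReal ∘ h.1.eigenvalues : Fin d → ℂ) = 0 := by
        funext i; simp [hz i (Finset.mem_univ i)]
      rw [hfun]
      have hdz : Matrix.diagonal (0 : Fin d → ℂ) = 0 := Matrix.diagonal_zero
      rw [hdz, map_zero]
    exact hne this

lemma negLogLik_smul {m : ℕ} (A : Fin m → Matrix (Fin d) (Fin d) ℂ) (f : Fin m → ℝ)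
    (hf : ∀ i, 0 ≤ f i) (σ : Matrix (Fin d) (Fin d) ℂ)
    (hpos : ∀ i, 0 < f i → 0 < ((A i * σ).trace).re) {c : ℝ} (hc : 0 < c) :
    negLogLik A f ((c : ℂ) • σ) = negLogLik A f σ - (∑ i, f i) * Real.log c := by
  unfold negLogLik
  have key : ∀ i, f i * Real.log ((A i * ((c : ℂ) • σ)).trace.re)
      = f i * Real.log c + f i * Real.log ((A i * σ).trace.re) := by
    intro i
    have htr : (A i * ((c : ℂ) • σ)).trace.re = c * (A i * σ).trace.re := by
      rw [mul_smul_comm, trace_smul]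
      simp [Complex.smul_re]
    rw [htr]
    rcases eq_or_lt_of_le (hf i) with h0 | h0
    · simp [← h0]
    · rw [Real.log_mul (ne_of_gt hc) (ne_of_gt (hpos i h0))]
      ring
  rw [Finset.sum_congr rfl (fun i _ => key i), Finset.sum_add_distrib, ← Finset.sum_mul]
  ring

end Aux

/-- Theorem (unconstrained MLE equivalence): with `λ = Σ f_i > 0`, a point `ρ` of
`D = {σ PSD : Re(tr(A_i σ)) > 0 whenever f_i > 0}` minimizes `L` over
`D₁ = {σ ∈ D : tr σ = 1}` (and has trace one) iff it minimizes the trace-penalized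
objective `L(·) + λ·Re(tr(·))` over `D`. -/
theorem unconstrained_mle_equivalence {d m : ℕ} (hd : 1 ≤ d) (hm : 1 ≤ m)
    (A : Fin m → Matrix (Fin d) (Fin d) ℂ) (f : Fin m → ℝ)
    (hA : ∀ i, (A i).PosSemidef) (hf : ∀ i, 0 ≤ f i)
    (hlam : 0 < ∑ i, f i)
    (ρ : Matrix (Fin d) (Fin d) ℂ) (hρ : ρ.PosSemidef)
    (hρpos : ∀ i, 0 < f i → 0 < ((A i * ρ).trace).re) :
    (ρ.trace = 1 ∧
      ∀ σ : Matrix (Fin d) (Fin d) ℂ, σ.PosSemidef →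
        (∀ i, 0 < f i → 0 < ((A i * σ).trace).re) → σ.trace = 1 →
        negLogLik A f ρ ≤ negLogLik A f σ)
    ↔
    (∀ σ : Matrix (Fin d) (Fin d) ℂ, σ.PosSemidef →
        (∀ i, 0 < f i → 0 < ((A i * σ).trace).re) →
        negLogLik A f ρ + (∑ i, f i) * (ρ.trace).re ≤
          negLogLik A f σ + (∑ i, f i) * (σ.trace).re) := by
  set lam := ∑ i, f i with hlamdef
  obtain ⟨i0, hi0⟩ : ∃ i, 0 < f i := by
    by_contra h
    push_neg at h
    have : ∑ i, f i = 0 := Finset.sum_eq_zero (fun i _ => le_antisymm (h i) (hf i))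
    rw [← hlamdef] at this; linarith
  -- any σ in D is nonzero, hence has positive real trace
  have Dpos : ∀ σ : Matrix (Fin d) (Fin d) ℂ, σ.PosSemidef →
      (∀ i, 0 < f i → 0 < ((A i * σ).trace).re) → 0 < σ.trace.re := by
    intro σ hσ hσpos
    apply psd_trace_re_pos hσ
    intro h0
    have := hσpos i0 hi0
    rw [h0] at this
    simp at this
  -- scaled matrix stays in D
  have Dsmul : ∀ (σ : Matrix (Fin d) (Fin d) ℂ), σ.PosSemidef →
      (∀ i, 0 < f i → 0 < ((A i * σ).trace).re) → ∀ c : ℝ, 0 < c →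
      (((c:ℂ) • σ).PosSemidef ∧ (∀ i, 0 < f i → 0 < ((A i * ((c:ℂ) • σ)).trace).re)) := by
    intro σ hσ hσpos c hc
    refine ⟨psd_smul hσ hc.le, fun i hi => ?_⟩
    have : (A i * ((c:ℂ) • σ)).trace.re = c * (A i * σ).trace.re := by
      rw [mul_smul_comm, trace_smul]; simp [Complex.smul_re]
    rw [this]
    exact mul_pos hc (hσpos i hi)
  have tr_smul_re : ∀ (σ : Matrix (Fin d) (Fin d) ℂ) (c : ℝ),
      (((c:ℂ) • σ).trace).re = c * σ.trace.re := by
    intro σ c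
    rw [trace_smul]; simp [Complex.smul_re]
  constructor
  · rintro ⟨htr, hmin⟩ σ hσ hσpos
    have hr1 : ρ.trace.re = 1 := by rw [htr]; simp
    set s := σ.trace.re with hs
    have hspos : 0 < s := Dpos σ hσ hσpos
    obtain ⟨hσ'psd, hσ'pos⟩ := Dsmul σ hσ hσpos s⁻¹ (by positivity)
    have hσ'tr : (((s⁻¹:ℝ):ℂ) • σ).trace = 1 := by
      rw [trace_smul, herm_trace_real hσ.1, ← hs, smul_eq_mul]
      push_cast
      exact inv_mul_cancel₀ (by exact_mod_cast ne_of_gt hspos)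
    have hL := hmin _ hσ'psd hσ'pos hσ'tr
    rw [negLogLik_smul A f hf σ hσpos (by positivity),
        Real.log_inv] at hL
    have hlog : Real.log s ≤ s - 1 := Real.log_le_sub_one_of_pos hspos
    have h2 : lam * Real.log s ≤ lam * (s - 1) :=
      mul_le_mul_of_nonneg_left hlog hlam.le
    rw [hr1]
    nlinarith [hL, h2]
  · intro hmin
    have hrpos : 0 < ρ.trace.re := Dpos ρ hρ hρpos
    set r := ρ.trace.re with hrd
    -- apply minimality to the rescaled ρ to deduce r = 1
    obtain ⟨hρ'psd, hρ'pos⟩ := Dsmul ρ hρ hρpos r⁻¹ (by positivity)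
    have hL := hmin _ hρ'psd hρ'pos
    rw [negLogLik_smul A f hf ρ hρpos (by positivity),
        Real.log_inv, tr_smul_re, ← hrd, inv_mul_cancel₀ (ne_of_gt hrpos)] at hL
    -- hL : L ρ + lam * r ≤ L ρ - lam * (- log r) + lam * 1
    have hkey : lam * r ≤ lam * Real.log r + lam := by nlinarith [hL]
    have hr1 : r = 1 := by
      by_contra hne
      have := Real.log_lt_sub_one_of_pos hrpos hne
      nlinarith [mul_lt_mul_of_pos_left this hlam]
    have htr : ρ.trace = 1 := by
      rw [herm_trace_real hρ.1, ← hrd, hr1]; simp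
    refine ⟨htr, fun σ hσ hσpos hσtr => ?_⟩
    have := hmin σ hσ hσpos
    rw [hr1, hσtr] at this
    simp only [Complex.one_re] at this
    linarith
end

section
/- Unit trace at any minimizer of the penalized problem: Set λ = Σ_{i=1}^m f_i and assume λ > 0. Suppose ρ is Hermitian PSD with Re(tr(A_i ρ)) > 0 for every i with f_i > 0, and ρ minimizes the penalized objective σ ↦ L(σ) + λ·Re(tr(σ)) over all Hermitian PSD matrices σ with Re(tr(A_i σ)) > 0 for every i with f_i > 0. Then Re(tr(ρ)) = 1. -/
open Matrix BigOperators ComplexOrder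

/-- Unit trace at any minimizer of the penalized problem: with `λ = Σ f_i > 0`,
any minimizer of `σ ↦ L(σ) + λ·Re(tr σ)` over Hermitian PSD matrices with
`Re(tr(A_i σ)) > 0` whenever `f_i > 0` has `Re(tr ρ) = 1`. -/
theorem unit_trace_of_penalized_minimizer {d m : ℕ} (hd : 1 ≤ d) (hm : 1 ≤ m)
    (A : Fin m → Matrix (Fin d) (Fin d) ℂ) (f : Fin m → ℝ)
    (hA : ∀ i, (A i).PosSemidef) (hf : ∀ i, 0 ≤ f i)
    (hlam : 0 < ∑ i, f i)
    (ρ : Matrix (Fin d) (Fin d) ℂ) (hρ : ρ.PosSemidef)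
    (hρpos : ∀ i, 0 < f i → 0 < ((A i * ρ).trace).re)
    (hmin : ∀ σ : Matrix (Fin d) (Fin d) ℂ, σ.PosSemidef →
      (∀ i, 0 < f i → 0 < ((A i * σ).trace).re) →
      negLogLik A f ρ + (∑ i, f i) * (ρ.trace).re ≤
        negLogLik A f σ + (∑ i, f i) * (σ.trace).re) :
    (ρ.trace).re = 1 := by
  set lam := ∑ i, f i with hlamdef
  set T := (ρ.trace).re with hTdef
  have key : ∀ t : ℝ, 0 < t → Real.log t ≤ T * (t - 1) := by
    intro t ht
    have hpsd : ((t : ℂ) • ρ).PosSemidef := by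
      constructor
      · unfold Matrix.IsHermitian
        rw [conjTranspose_smul, hρ.1.eq]
        congr 1
        simp
      · intro x
        have h0 := hρ.2 x
        have hc : (0:ℂ) ≤ (t:ℂ) := Complex.zero_le_real.mpr ht.le
        have e : (x.sum fun i xi => x.sum fun j xj => star xi * ((t:ℂ) • ρ) i j * xj)
            = (t:ℂ) * x.sum fun i xi => x.sum fun j xj => star xi * ρ i j * xj := by
          simp only [Finsupp.mul_sum, Matrix.smul_apply, smul_eq_mul]
          refine Finsupp.sum_congr fun i _ => Finsupp.sum_congr fun j _ => ?_
          ring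
        rw [e]
        exact mul_nonneg hc h0
    have htr : ∀ i, ((A i * ((t : ℂ) • ρ)).trace).re = t * ((A i * ρ).trace).re := by
      intro i
      rw [mul_smul_comm, trace_smul]
      simp [Complex.smul_re]
    have hσpos : ∀ i, 0 < f i → 0 < ((A i * ((t : ℂ) • ρ)).trace).re := by
      intro i hi
      rw [htr i]
      exact mul_pos ht (hρpos i hi)
    have hL : negLogLik A f ((t : ℂ) • ρ) = negLogLik A f ρ - lam * Real.log t := by
      unfold negLogLik
      rw [hlamdef, Finset.sum_mul]
      rw [show (∑ i, f i * Real.log (((A i * ((t:ℂ) • ρ)).trace).re))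
          = ∑ i, (f i * Real.log (((A i * ρ).trace).re) + f i * Real.log t) from ?_]
      · rw [Finset.sum_add_distrib]; ring
      refine Finset.sum_congr rfl fun i _ => ?_
      rcases eq_or_lt_of_le (hf i) with h0 | h0
      · simp [← h0]
      · rw [htr i, Real.log_mul ht.ne' (hρpos i h0).ne', mul_add]
        ring
    have htrρ : (((t : ℂ) • ρ).trace).re = t * T := by
      rw [trace_smul]; simp [Complex.smul_re, hTdef]
    have hm2 := hmin ((t : ℂ) • ρ) hpsd hσpos
    rw [hL, htrρ] at hm2
    have h3 : lam * Real.log t ≤ lam * (T * (t - 1)) := by nlinarith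
    exact le_of_mul_le_mul_left (by linarith) hlam
  have hT2 := key 2 (by norm_num)
  have hTpos : 0 < T := by
    have := Real.log_pos (by norm_num : (1:ℝ) < 2)
    linarith
  have hinv := key T⁻¹ (inv_pos.mpr hTpos)
  rw [Real.log_inv, mul_sub, mul_inv_cancel₀ hTpos.ne'] at hinv
  by_contra hne
  have := Real.log_lt_sub_one_of_pos hTpos hne
  linarith
end

section
/- Proposition (a posteriori suboptimality bound): Let ρ̃ be a density matrix with Re(tr(A_i ρ̃)) > 0 for every i with f_i > 0. Define the Hermitian matrix G = −Σ_{i=1}^m (f_i / Re(tr(A_i ρ̃)))·A_i (the gradient of L at ρ̃; terms with f_i = 0 contribute the zero matrix), and set μ = max(0, −λ_min(G)), where λ_min(G) is the smallest eigenvalue of G. Then for every density matrix ρ with Re(tr(A_i ρ)) > 0 for every i with f_i > 0, one has L(ρ̃) ≤ L(ρ) + Re(tr(G ρ̃)) + μ; in particular L(ρ̃) − L⋆ ≤ Re(tr(G ρ̃)) + μ where L⋆ is the infimum of L over such density matrices. -/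
open Matrix BigOperators ComplexOrder

/-- The trace of a PSD complex matrix has nonnegative real part. -/
lemma psd_trace_re_nonneg_s8 {n : Type*} [Fintype n] [DecidableEq n]
    {P : Matrix n n ℂ} (hP : P.PosSemidef) : 0 ≤ P.trace.re := by
  have h : ∀ i, 0 ≤ (P i i).re := by
    intro i
    have := hP.re_dotProduct_nonneg (Pi.single i 1)
    simpa [dotProduct, Matrix.mulVec, Pi.single_apply, Finset.mul_sum] using this
  rw [Matrix.trace, Complex.re_sum]
  exact Finset.sum_nonneg fun i _ => h i

open scoped MatrixOrder in
lemma psd_exists_eq_conjTranspose_mul_self {n : Type*} [Fintype n] [DecidableEq n]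
    {N : Matrix n n ℂ} (hN : N.PosSemidef) : ∃ B : Matrix n n ℂ, N = Bᴴ * B := by
  have h0 : 0 ≤ N := Matrix.nonneg_iff_posSemidef.mpr hN
  refine ⟨CFC.sqrt N, ?_⟩
  rw [← Matrix.star_eq_conjTranspose, (CFC.sqrt_nonneg N).star_eq, CFC.sqrt_mul_sqrt_self N h0]

/-- The trace of a product of PSD complex matrices has nonnegative real part. -/
lemma psd_trace_mul_re_nonneg_s8 {n : Type*} [Fintype n] [DecidableEq n]
    {M N : Matrix n n ℂ} (hM : M.PosSemidef) (hN : N.PosSemidef) :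
    0 ≤ ((M * N).trace).re := by
  obtain ⟨B, rfl⟩ := psd_exists_eq_conjTranspose_mul_self hN
  have h1 : (M * (Bᴴ * B)).trace = (B * M * Bᴴ).trace := by
    rw [← mul_assoc, Matrix.trace_mul_comm, ← mul_assoc]
  rw [h1]
  exact psd_trace_re_nonneg_s8 (hM.mul_mul_conjTranspose_same B)

/-- Proposition (a posteriori suboptimality bound): for any feasible density matrix
`ρ̃`, with `G = ∇L(ρ̃) = −Σ_i (f_i / Re(tr(A_i ρ̃)))·A_i` and
`μ = max(0, −λ_min(G))`, every feasible density matrix `ρ` satisfies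
`L(ρ̃) ≤ L(ρ) + Re(tr(G ρ̃)) + μ`. -/
theorem suboptimality_bound {d m : ℕ} (hd : 1 ≤ d) (hm : 1 ≤ m)
    (A : Fin m → Matrix (Fin d) (Fin d) ℂ) (f : Fin m → ℝ)
    (hA : ∀ i, (A i).PosSemidef) (hf : ∀ i, 0 ≤ f i)
    (ρt : Matrix (Fin d) (Fin d) ℂ) (hρt : ρt.PosSemidef) (hρttr : ρt.trace = 1)
    (hρtpos : ∀ i, 0 < f i → 0 < ((A i * ρt).trace).re)
    (G : Matrix (Fin d) (Fin d) ℂ)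
    (hGdef : G = -∑ i, (f i / ((A i * ρt).trace).re) • A i)
    (hG : G.IsHermitian)
    (μ : ℝ) (hμ : μ = max 0 (-(⨅ j, hG.eigenvalues j))) :
    ∀ ρ : Matrix (Fin d) (Fin d) ℂ, ρ.PosSemidef → ρ.trace = 1 →
      (∀ i, 0 < f i → 0 < ((A i * ρ).trace).re) →
      negLogLik A f ρt ≤ negLogLik A f ρ + ((G * ρt).trace).re + μ := by
  intro ρ hρ hρtr hρpos
  set xt : Fin m → ℝ := fun i => ((A i * ρt).trace).re with hxt
  set x : Fin m → ℝ := fun i => ((A i * ρ).trace).re with hx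
  set c : Fin m → ℝ := fun i => f i / xt i with hc
  -- trace formula for G times any matrix
  have claim1 : ∀ σ : Matrix (Fin d) (Fin d) ℂ,
      ((G * σ).trace).re = -∑ i, c i * ((A i * σ).trace).re := by
    intro σ
    rw [hGdef]
    rw [neg_mul, Matrix.trace_neg, Complex.neg_re, neg_inj, Finset.sum_mul,
      Matrix.trace_sum, Complex.re_sum]
    congr 1; funext i
    rw [Matrix.smul_mul, Matrix.trace_smul, Complex.smul_re]
    rfl
  -- μ bounds eigenvalues from below
  have hev : ∀ j, 0 ≤ hG.eigenvalues j + μ := by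
    intro j
    have h1 : ⨅ j, hG.eigenvalues j ≤ hG.eigenvalues j :=
      ciInf_le (Set.Finite.bddBelow (Set.finite_range _)) j
    have h2 : -(⨅ j, hG.eigenvalues j) ≤ μ := hμ ▸ le_max_right _ _
    linarith
  -- G + μ • 1 is PSD
  set U : Matrix (Fin d) (Fin d) ℂ := (hG.eigenvectorUnitary : Matrix (Fin d) (Fin d) ℂ) with hUdef
  have hU : U * star U = 1 := Matrix.mem_unitaryGroup_iff.mp hG.eigenvectorUnitary.2
  have hsmul1 : (μ : ℂ) • (1 : Matrix (Fin d) (Fin d) ℂ) =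
      Matrix.diagonal (fun _ => (μ : ℂ)) := by
    ext i j
    simp [Matrix.one_apply, Matrix.diagonal_apply]
  have key : G + (μ : ℂ) • 1 =
      U * Matrix.diagonal (fun j => ((hG.eigenvalues j + μ : ℝ) : ℂ)) * star U := by
    have hdiag : Matrix.diagonal (fun j => ((hG.eigenvalues j + μ : ℝ) : ℂ)) =
        Matrix.diagonal (RCLike.ofReal ∘ hG.eigenvalues) + (μ : ℂ) • 1 := by
      rw [hsmul1, Matrix.diagonal_add]
      congr 1
      funext j
      simp [Function.comp, RCLike.ofReal_add]
    rw [hdiag, mul_add, add_mul]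
    congr 1
    · exact hG.spectral_theorem
    · rw [Matrix.mul_smul, Matrix.mul_one, Matrix.smul_mul, hU]
  have hpsd : (G + (μ : ℂ) • 1).PosSemidef := by
    rw [key]
    have hdpsd : (Matrix.diagonal (fun j => ((hG.eigenvalues j + μ : ℝ) : ℂ))).PosSemidef :=
      Matrix.posSemidef_diagonal_iff.mpr fun j => by
        rw [RCLike.nonneg_iff]
        constructor
        · simpa using hev j
        · simp
    have := hdpsd.mul_mul_conjTranspose_same U
    simpa [Matrix.star_eq_conjTranspose] using this
  -- hence Re tr(G ρ) ≥ -μ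
  have hGρ : -μ ≤ ((G * ρ).trace).re := by
    have h0 : 0 ≤ (((G + (μ : ℂ) • 1) * ρ).trace).re := psd_trace_mul_re_nonneg_s8 hpsd hρ
    have h1 : ((G + (μ : ℂ) • 1) * ρ).trace = (G * ρ).trace + (μ : ℂ) * ρ.trace := by
      rw [Matrix.add_mul, Matrix.trace_add, Matrix.smul_mul, Matrix.one_mul,
        Matrix.trace_smul, smul_eq_mul]
    rw [h1, hρtr, mul_one, Complex.add_re, Complex.ofReal_re] at h0
    linarith
  -- per-index concavity inequality
  have claim2 : ∀ i, f i * Real.log (x i) - f i * Real.log (xt i) ≤ c i * x i - f i := by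
    intro i
    rcases eq_or_lt_of_le (hf i) with h0 | h0
    · simp [hc, ← h0]
    · have hxti : 0 < xt i := hρtpos i h0
      have hxi : 0 < x i := hρpos i h0
      have hlog : Real.log (x i) - Real.log (xt i) ≤ x i / xt i - 1 := by
        have := Real.log_le_sub_one_of_pos (div_pos hxi hxti)
        rwa [Real.log_div (ne_of_gt hxi) (ne_of_gt hxti)] at this
      have hmul := mul_le_mul_of_nonneg_left hlog (hf i)
      have hcx : c i * x i = f i * (x i / xt i) := by
        rw [hc]; field_simp
      rw [hcx]
      nlinarith
  -- value of Re tr(G ρt)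
  have claim3 : ((G * ρt).trace).re = -∑ i, f i := by
    rw [claim1 ρt, neg_inj]
    congr 1; funext i
    rcases eq_or_lt_of_le (hf i) with h0 | h0
    · simp [hc, ← h0]
    · have hxti : 0 < xt i := hρtpos i h0
      rw [hc]
      exact div_mul_cancel₀ _ (ne_of_gt hxti)
  -- sum the per-index inequalities
  have hsum : ∑ i, f i * Real.log (x i) - ∑ i, f i * Real.log (xt i) ≤
      (∑ i, c i * x i) - ∑ i, f i := by
    rw [← Finset.sum_sub_distrib, ← Finset.sum_sub_distrib]
    exact Finset.sum_le_sum fun i _ => claim2 i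
  have hcxμ : ∑ i, c i * x i ≤ μ := by
    have := claim1 ρ
    rw [this] at hGρ
    linarith
  rw [negLogLik, negLogLik, claim3]
  have e1 : ∀ σ, ∑ i, f i * Real.log ((A i * σ).trace.re) =
      ∑ i, f i * Real.log (((A i * σ).trace).re) := fun _ => rfl
  linarith
end

section
/- Corollary (error bound for Burer–Monteiro factors): Let U be a d × r complex matrix with Re(tr(Uᴴ U)) = 1 and Re(tr(Uᴴ A_i U)) > 0 for every i with f_i > 0. Then ρ̃ = U Uᴴ is a density matrix (Hermitian, PSD, trace 1), and with G = −Σ_{i=1}^m (f_i / Re(tr(A_i ρ̃)))·A_i and μ = max(0, −λ_min(G)), for every density matrix ρ with Re(tr(A_i ρ)) > 0 for every i with f_i > 0 one has L(ρ̃) ≤ L(ρ) + Re(tr(G ρ̃)) + μ. -/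
open Matrix BigOperators ComplexOrder

lemma psd_trace_nonneg {n : Type*} [Fintype n] [DecidableEq n] {M : Matrix n n ℂ}
    (hM : M.PosSemidef) : 0 ≤ M.trace := by
  exact hM.trace_nonneg

open scoped MatrixOrder in
lemma psd_mul_trace_re_nonneg_s9 {n : Type*} [Fintype n] [DecidableEq n]
    {P Q : Matrix n n ℂ} (hP : P.PosSemidef) (hQ : Q.PosSemidef) :
    0 ≤ ((P * Q).trace).re := by
  have hS : (CFC.sqrt P).IsHermitian := (CFC.sqrt_nonneg P).posSemidef.1
  have h2 : (P * Q).trace = (CFC.sqrt P * Q * (CFC.sqrt P)ᴴ).trace := by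
    calc (P * Q).trace = ((CFC.sqrt P * CFC.sqrt P) * Q).trace := by rw [CFC.sqrt_mul_sqrt_self P hP.nonneg]
    _ = ((CFC.sqrt P * Q) * CFC.sqrt P).trace := by rw [mul_assoc, Matrix.trace_mul_comm]
    _ = (CFC.sqrt P * Q * (CFC.sqrt P)ᴴ).trace := by rw [hS.eq]
  have h3 : (0:ℂ) ≤ (CFC.sqrt P * Q * (CFC.sqrt P)ᴴ).trace :=
    psd_trace_nonneg (hQ.mul_mul_conjTranspose_same (CFC.sqrt P))
  rw [h2]
  exact (Complex.le_def.mp h3).1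

lemma psd_shift {n : Type*} [Fintype n] [DecidableEq n]
    {G : Matrix n n ℂ} (hG : G.IsHermitian) (c : ℝ) (hc : ∀ j, c ≤ hG.eigenvalues j) :
    (G - (c : ℂ) • 1).PosSemidef := by
  set V := (hG.eigenvectorUnitary : Matrix n n ℂ) with hVdef
  have hV : V * star V = 1 := Matrix.mem_unitaryGroup_iff.mp hG.eigenvectorUnitary.2
  have hkey : G - (c : ℂ) • 1 = V * diagonal (fun j => ((hG.eigenvalues j - c : ℝ) : ℂ)) * star V := by
    conv_lhs => rw [hG.spectral_theorem, Unitary.conjStarAlgAut_apply, ← hV]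
    rw [← hVdef]
    have hdg : diagonal (fun j => ((hG.eigenvalues j - c : ℝ) : ℂ))
        = diagonal (RCLike.ofReal ∘ hG.eigenvalues) - (c : ℂ) • (1 : Matrix n n ℂ) := by
      ext j k
      by_cases h : j = k <;>
        simp [Matrix.diagonal_apply, Matrix.one_apply, h, sub_eq_add_neg]
    rw [hdg, Matrix.mul_sub, Matrix.sub_mul, Matrix.mul_smul, mul_one, Matrix.smul_mul]
  rw [hkey]
  refine (Matrix.posSemidef_diagonal_iff.mpr fun j => ?_).mul_mul_conjTranspose_same V
  rw [Complex.zero_le_real]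
  linarith [hc j]

/-- Corollary (error bound for Burer–Monteiro factors): if `U` has unit
Hilbert–Schmidt norm then `ρ̃ = U Uᴴ` is a density matrix and the a posteriori
suboptimality bound `L(ρ̃) ≤ L(ρ) + Re(tr(G ρ̃)) + μ` holds for every feasible
density matrix `ρ`, where `G = −Σ_i (f_i / Re(tr(A_i ρ̃)))·A_i` and
`μ = max(0, −λ_min(G))`. -/
theorem bm_error_bound {d r m : ℕ} (hd : 1 ≤ d) (hr : 1 ≤ r) (hm : 1 ≤ m)
    (A : Fin m → Matrix (Fin d) (Fin d) ℂ) (f : Fin m → ℝ)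
    (hA : ∀ i, (A i).PosSemidef) (hf : ∀ i, 0 ≤ f i)
    (U : Matrix (Fin d) (Fin r) ℂ)
    (hU : ((Uᴴ * U).trace).re = 1)
    (hUpos : ∀ i, 0 < f i → 0 < ((Uᴴ * A i * U).trace).re)
    (G : Matrix (Fin d) (Fin d) ℂ)
    (hGdef : G = -∑ i, (f i / ((A i * (U * Uᴴ)).trace).re) • A i)
    (hG : G.IsHermitian)
    (μ : ℝ) (hμ : μ = max 0 (-(⨅ j, hG.eigenvalues j))) :
    (U * Uᴴ).PosSemidef ∧ (U * Uᴴ).trace = 1 ∧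
      ∀ ρ : Matrix (Fin d) (Fin d) ℂ, ρ.PosSemidef → ρ.trace = 1 →
        (∀ i, 0 < f i → 0 < ((A i * ρ).trace).re) →
        negLogLik A f (U * Uᴴ) ≤ negLogLik A f ρ + ((G * (U * Uᴴ)).trace).re + μ := by
  have hPSD : (U * Uᴴ).PosSemidef := Matrix.posSemidef_self_mul_conjTranspose U
  have htrUU : (U * Uᴴ).trace = (Uᴴ * U).trace := Matrix.trace_mul_comm U Uᴴ
  have htr1 : (U * Uᴴ).trace = 1 := by
    have h0 := psd_trace_nonneg hPSD
    apply Complex.ext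
    · rw [htrUU]; simpa using hU
    · have := (Complex.le_def.mp h0).2
      simpa using this.symm
  refine ⟨hPSD, htr1, ?_⟩
  intro ρ hρ hρtr hρpos
  -- notation
  set a : Fin m → ℝ := fun i => ((A i * (U * Uᴴ)).trace).re with ha_def
  have hapos : ∀ i, 0 < f i → 0 < a i := by
    intro i hi
    have : (A i * (U * Uᴴ)).trace = (Uᴴ * A i * U).trace := by
      conv_rhs => rw [Matrix.mul_assoc, Matrix.trace_mul_comm, Matrix.mul_assoc]
    simp only [ha_def, this]
    exact hUpos i hi
  have key : ∀ σ : Matrix (Fin d) (Fin d) ℂ,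
      ((G * σ).trace).re = -∑ i, (f i / a i) * ((A i * σ).trace).re := by
    intro σ
    rw [hGdef, Matrix.neg_mul, Finset.sum_mul]
    simp [Matrix.smul_mul, Complex.re_sum, Complex.smul_re]
    rfl
  -- eigenvalue bound:  ⨅ ≤ Re tr (G ρ)
  set c0 : ℝ := ⨅ j, hG.eigenvalues j with hc0
  have hmin : c0 ≤ ((G * ρ).trace).re := by
    have hone : Nonempty (Fin d) := ⟨⟨0, hd⟩⟩
    have hshift : (G - (c0 : ℂ) • 1).PosSemidef :=
      psd_shift hG c0 fun j => ciInf_le (Set.Finite.bddBelow (Set.finite_range _)) j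
    have h := psd_mul_trace_re_nonneg_s9 hshift hρ
    have hexp : ((G - (c0 : ℂ) • 1) * ρ).trace = (G * ρ).trace - (c0 : ℂ) := by
      rw [Matrix.sub_mul, Matrix.trace_sub, Matrix.smul_mul, one_mul, Matrix.trace_smul,
        hρtr, smul_eq_mul, mul_one]
    rw [hexp] at h
    simpa using h
  have hmu : -((G * ρ).trace).re ≤ μ := by
    rw [hμ]
    calc -((G * ρ).trace).re ≤ -c0 := by linarith
    _ ≤ max 0 (-c0) := le_max_right _ _
  -- main inequality
  have hsum : negLogLik A f (U * Uᴴ) ≤ negLogLik A f ρ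
      + ((G * (U * Uᴴ)).trace).re - ((G * ρ).trace).re := by
    rw [negLogLik, negLogLik, key, key]
    have hterm : ∀ i ∈ Finset.univ, f i * Real.log ((A i * ρ).trace.re)
        - f i * Real.log ((A i * (U * Uᴴ)).trace.re)
        ≤ (f i / a i) * ((A i * ρ).trace).re - (f i / a i) * a i := by
      intro i _
      rcases eq_or_lt_of_le (hf i) with h0 | h0
      · simp [← h0]
      · have hai : 0 < a i := hapos i h0
        have hci : 0 < ((A i * ρ).trace).re := hρpos i h0
        set ci := ((A i * ρ).trace).re
        have hlog : Real.log ci - Real.log (a i) ≤ ci / a i - 1 := by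
          have := Real.log_le_sub_one_of_pos (div_pos hci hai)
          rwa [Real.log_div hci.ne' hai.ne'] at this
        have : f i * (Real.log ci - Real.log (a i)) ≤ f i * (ci / a i - 1) :=
          mul_le_mul_of_nonneg_left hlog (hf i)
        have heq : f i * (ci / a i - 1) = (f i / a i) * ci - (f i / a i) * a i := by
          field_simp
        nlinarith [this]
    have := Finset.sum_le_sum hterm
    rw [Finset.sum_sub_distrib, Finset.sum_sub_distrib] at this
    simp only [ha_def] at *
    linarith
  linarith
end

section
/- Theorem (Burer–Monteiro local minima yield rank-constrained local minima): Fix r with 1 ≤ r ≤ d. Let U⋆ be a d × r complex matrix with ‖U⋆‖_F² = Re(tr(U⋆ᴴ U⋆)) = 1 and Re(tr(U⋆ᴴ A_i U⋆)) > 0 for every i with f_i > 0. If U⋆ is a local minimizer of J on the set {U ∈ ℂ^{d×r} : Re(tr(Uᴴ U)) = 1}, then ρ⋆ = U⋆ U⋆ᴴ is a local minimizer of L on the set {ρ : ρ Hermitian PSD, tr(ρ) = 1, rank(ρ) ≤ r}. -/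
open Matrix BigOperators ComplexOrder

/-- Factored (Burer–Monteiro) objective `J(U) = −Σ_i f_i · log(Re(tr(Uᴴ A_i U)))`. -/
noncomputable def facObj {d r m : ℕ} (A : Fin m → Matrix (Fin d) (Fin d) ℂ)
    (f : Fin m → ℝ) (U : Matrix (Fin d) (Fin r) ℂ) : ℝ :=
  -∑ i, f i * Real.log ((Uᴴ * A i * U).trace.re)

open scoped InnerProductSpace

-- Lemma 1: low-rank PSD factorization
lemma exists_factor {d r : ℕ} (ρ : Matrix (Fin d) (Fin d) ℂ) (hψ : ρ.PosSemidef)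
    (hrk : ρ.rank ≤ r) : ∃ V : Matrix (Fin d) (Fin r) ℂ, ρ = V * Vᴴ := by
  have hH := hψ.1
  have hcard : Fintype.card {i // hH.eigenvalues i ≠ 0} ≤ Fintype.card (Fin r) := by
    rw [Fintype.card_fin]
    exact le_trans (le_of_eq hH.rank_eq_card_non_zero_eigs.symm) hrk
  obtain ⟨e⟩ := Function.Embedding.nonempty_of_card_le hcard
  set lam := hH.eigenvalues with hlam
  classical
  set B : Matrix (Fin d) (Fin r) ℂ := fun i k =>
    if h : lam i ≠ 0 then (if e ⟨i, h⟩ = k then ((Real.sqrt (lam i) : ℝ) : ℂ) else 0) else 0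
    with hB
  have hBB : B * Bᴴ = Matrix.diagonal (fun i => ((lam i : ℝ) : ℂ)) := by
    ext i j
    simp only [Matrix.mul_apply, Matrix.conjTranspose_apply]
    simp only [hB]
    by_cases hi : lam i ≠ 0
    · by_cases hj : lam j ≠ 0
      · rw [Finset.sum_eq_single (e ⟨i, hi⟩)]
        · simp only [dif_pos hi, dif_pos hj, if_pos rfl]
          by_cases hij : i = j
          · subst hij
            simp only [if_pos rfl, Matrix.diagonal_apply_eq, if_true]
            rw [show (star ((Real.sqrt (lam i) : ℝ) : ℂ)) = ((Real.sqrt (lam i) : ℝ) : ℂ) from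
              Complex.conj_ofReal _, ← Complex.ofReal_mul,
              Real.mul_self_sqrt (hψ.eigenvalues_nonneg i)]
          · have : e ⟨j, hj⟩ ≠ e ⟨i, hi⟩ := by
              intro hc; exact hij (congrArg Subtype.val (e.injective hc)).symm
            simp [this, Matrix.diagonal_apply_ne _ hij]
        · intro k _ hk
          simp [dif_pos hi, (show ¬ (e ⟨i, hi⟩ = k) from fun h => hk h.symm)]
        · intro h; exact absurd (Finset.mem_univ _) h
      · push_neg at hj
        have hij : i ≠ j := fun h => hi (h ▸ hj)
        simp [dif_neg (not_not_intro hj), Matrix.diagonal_apply_ne _ hij]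
    · push_neg at hi
      simp [dif_neg (not_not_intro hi), Matrix.diagonal_apply, hi]
  refine ⟨(hH.eigenvectorUnitary : Matrix (Fin d) (Fin d) ℂ) * B, ?_⟩
  have hsp := hH.spectral_theorem
  rw [Matrix.conjTranspose_mul, ← Matrix.mul_assoc, Matrix.mul_assoc _ B, hBB]
  conv_lhs => rw [hsp]
  rw [Unitary.conjStarAlgAut_apply, Matrix.star_eq_conjTranspose]
  rfl


lemma toEuclideanLin_mul {l m n : ℕ} (M : Matrix (Fin l) (Fin m) ℂ) (N : Matrix (Fin m) (Fin n) ℂ) :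
    Matrix.toEuclideanLin (M * N) =
      (Matrix.toEuclideanLin M).comp (Matrix.toEuclideanLin N) := by
  simp only [Matrix.toEuclideanLin_eq_toLin]
  exact Matrix.toLin_mul (PiLp.basisFun 2 ℂ (Fin n)) (PiLp.basisFun 2 ℂ (Fin m))
    (PiLp.basisFun 2 ℂ (Fin l)) M N

lemma fiber_factor {d r : ℕ} (U V : Matrix (Fin d) (Fin r) ℂ)
    (h : V * Vᴴ = U * Uᴴ) :
    ∃ W : Matrix (Fin r) (Fin r) ℂ, W ∈ Matrix.unitaryGroup (Fin r) ℂ ∧ V = U * W := by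
  set u : EuclideanSpace ℂ (Fin d) →ₗ[ℂ] EuclideanSpace ℂ (Fin r) := Matrix.toEuclideanLin Uᴴ
    with hu
  set v : EuclideanSpace ℂ (Fin d) →ₗ[ℂ] EuclideanSpace ℂ (Fin r) := Matrix.toEuclideanLin Vᴴ
    with hv
  have hinner : ∀ (M : Matrix (Fin d) (Fin r) ℂ) (x : EuclideanSpace ℂ (Fin d)),
      ⟪Matrix.toEuclideanLin Mᴴ x, Matrix.toEuclideanLin Mᴴ x⟫_ℂ
        = ⟪x, Matrix.toEuclideanLin (M * Mᴴ) x⟫_ℂ := by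
    intro M x
    rw [toEuclideanLin_mul, Matrix.toEuclideanLin_conjTranspose_eq_adjoint,
      LinearMap.adjoint_inner_left]
    rfl
  have hnormeq : ∀ x, ‖v x‖ = ‖u x‖ := by
    intro x
    have h1 := hinner V x
    have h2 := hinner U x
    rw [h] at h1
    have : ⟪v x, v x⟫_ℂ = ⟪u x, u x⟫_ℂ := by rw [hu, hv, h1, h2]
    rw [inner_self_eq_norm_sq_to_K, inner_self_eq_norm_sq_to_K] at this
    have h4 : ‖v x‖ ^ 2 = ‖u x‖ ^ 2 := by exact_mod_cast this
    exact (sq_eq_sq₀ (norm_nonneg _) (norm_nonneg _)).mp h4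
  have hker : ∀ x, u x = 0 → v x = 0 := by
    intro x hx
    have h5 := hnormeq x
    rw [hx, norm_zero] at h5
    exact norm_eq_zero.mp h5
  obtain ⟨s, hs⟩ := u.rangeRestrict.exists_rightInverse_of_surjective u.range_rangeRestrict
  have hus : ∀ y : LinearMap.range u, u (s y) = (y : EuclideanSpace ℂ (Fin r)) := by
    intro y
    have h6 := congrArg
      (fun (f : LinearMap.range u →ₗ[ℂ] LinearMap.range u) =>
        ((f y : LinearMap.range u) : EuclideanSpace ℂ (Fin r))) hs
    simpa using h6
  let L : (LinearMap.range u) →ₗᵢ[ℂ] EuclideanSpace ℂ (Fin r) :=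
    ⟨v.comp s, fun y => by rw [LinearMap.comp_apply, hnormeq, hus]; rfl⟩
  let W₀ := L.extend
  have hW₀ : ∀ x, W₀ (u x) = v x := by
    intro x
    have hmem : u x ∈ LinearMap.range u := LinearMap.mem_range_self u x
    have h7 : W₀ (u x) = L ⟨u x, hmem⟩ := L.extend_apply ⟨u x, hmem⟩
    rw [h7]
    show v (s ⟨u x, hmem⟩) = v x
    have h0 : u (s ⟨u x, hmem⟩ - x) = 0 := by
      rw [map_sub, hus]; simp
    have h8 := hker _ h0
    rw [map_sub] at h8
    exact sub_eq_zero.mp h8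
  let W' : Matrix (Fin r) (Fin r) ℂ := Matrix.toEuclideanLin.symm W₀.toLinearMap
  have hW'lin : Matrix.toEuclideanLin W' = W₀.toLinearMap :=
    LinearEquiv.apply_symm_apply _ _
  have hWU : W' * Uᴴ = Vᴴ := by
    apply Matrix.toEuclideanLin.injective
    rw [toEuclideanLin_mul, hW'lin]
    exact LinearMap.ext hW₀
  have hunit : W'ᴴ * W' = 1 := by
    apply Matrix.toEuclideanLin.injective
    rw [toEuclideanLin_mul, Matrix.toEuclideanLin_conjTranspose_eq_adjoint, hW'lin]
    have h1 : Matrix.toEuclideanLin (1 : Matrix (Fin r) (Fin r) ℂ) = LinearMap.id := by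
      rw [Matrix.toEuclideanLin_eq_toLin]; exact Matrix.toLin_one _
    rw [h1]
    apply LinearMap.ext; intro x
    apply ext_inner_left ℂ; intro y
    rw [LinearMap.comp_apply, LinearMap.adjoint_inner_right]
    simp only [LinearIsometry.coe_toLinearMap, LinearMap.id_coe, id_eq]
    exact W₀.inner_map_map y x
  refine ⟨W'ᴴ, ?_, ?_⟩
  · rw [Matrix.mem_unitaryGroup_iff, Matrix.star_eq_conjTranspose,
      Matrix.conjTranspose_conjTranspose]
    exact hunit
  · have h9 := congrArg Matrix.conjTranspose hWU
    rw [Matrix.conjTranspose_mul, Matrix.conjTranspose_conjTranspose,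
      Matrix.conjTranspose_conjTranspose] at h9
    exact h9.symm

lemma negLogLik_factor {d r m : ℕ} (A : Fin m → Matrix (Fin d) (Fin d) ℂ)
    (f : Fin m → ℝ) (V : Matrix (Fin d) (Fin r) ℂ) :
    negLogLik A f (V * Vᴴ) = facObj A f V := by
  unfold negLogLik facObj
  congr 1
  apply Finset.sum_congr rfl
  intro i _
  have : (A i * (V * Vᴴ)).trace = (Vᴴ * A i * V).trace := by
    rw [← Matrix.mul_assoc, Matrix.trace_mul_comm, ← Matrix.mul_assoc]
  rw [this]

-- re of tr (UᴴU) is sum of normSq of entries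
lemma re_trace_eq {d r : ℕ} (U : Matrix (Fin d) (Fin r) ℂ) :
    ((Uᴴ * U).trace).re = ∑ k : Fin r, ∑ i : Fin d, Complex.normSq (U i k) := by
  have h : (Uᴴ * U).trace = ∑ k : Fin r, ∑ i : Fin d, ((Complex.normSq (U i k) : ℝ) : ℂ) := by
    rw [Matrix.trace]
    apply Finset.sum_congr rfl
    intro k _
    rw [Matrix.diag_apply, Matrix.mul_apply]
    apply Finset.sum_congr rfl
    intro i _
    rw [Matrix.conjTranspose_apply]
    rw [show (star (U i k)) * U i k = ((Complex.normSq (U i k) : ℝ) : ℂ) by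
      rw [Complex.star_def, ← Complex.normSq_eq_conj_mul_self]]
  rw [h]
  simp [Complex.re_sum]

lemma sph_compact {d r : ℕ} :
    IsCompact {U : Matrix (Fin d) (Fin r) ℂ | ((Uᴴ * U).trace).re = 1} := by
  have hcont : Continuous fun U : Matrix (Fin d) (Fin r) ℂ => ((Uᴴ * U).trace).re :=
    Complex.continuous_re.comp
      (((continuous_id.matrix_conjTranspose).matrix_mul continuous_id).matrix_trace)
  have hclosed : IsClosed {U : Matrix (Fin d) (Fin r) ℂ | ((Uᴴ * U).trace).re = 1} :=
    isClosed_eq hcont continuous_const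
  have hsub : {U : Matrix (Fin d) (Fin r) ℂ | ((Uᴴ * U).trace).re = 1}
      ⊆ {U | ∀ i j, ‖U i j‖ ≤ 1} := by
    intro U hU i j
    have h1 : Complex.normSq (U i j) ≤ 1 := by
      have hle1 : Complex.normSq (U i j) ≤ ∑ i' : Fin d, Complex.normSq (U i' j) :=
        Finset.single_le_sum (f := fun i' => Complex.normSq (U i' j))
          (fun _ _ => Complex.normSq_nonneg _) (Finset.mem_univ i)
      have hle2 : ∑ i' : Fin d, Complex.normSq (U i' j)
          ≤ ∑ k : Fin r, ∑ i' : Fin d, Complex.normSq (U i' k) :=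
        Finset.single_le_sum (f := fun k => ∑ i' : Fin d, Complex.normSq (U i' k))
          (fun _ _ => Finset.sum_nonneg fun _ _ => Complex.normSq_nonneg _)
          (Finset.mem_univ j)
      have hle := le_trans hle1 hle2
      rw [← re_trace_eq U] at hle
      rwa [Set.mem_setOf_eq.mp hU] at hle
    rw [Complex.norm_def]
    exact Real.sqrt_le_one.mpr h1
  have hK : IsCompact {U : Matrix (Fin d) (Fin r) ℂ | ∀ i j, ‖U i j‖ ≤ 1} := by
    have hKeq : {U : Matrix (Fin d) (Fin r) ℂ | ∀ i j, ‖U i j‖ ≤ 1}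
        = Set.univ.pi fun _ : Fin d =>
            (Set.univ.pi fun _ : Fin r => Metric.closedBall (0:ℂ) 1) := by
      ext U
      constructor
      · intro hU
        refine Set.mem_univ_pi.mpr fun i => Set.mem_univ_pi.mpr fun j => ?_
        rw [Metric.mem_closedBall, Complex.dist_eq, sub_zero]
        exact hU i j
      · intro hU i j
        have h2 := Set.mem_univ_pi.mp (Set.mem_univ_pi.mp hU i) j
        rwa [Metric.mem_closedBall, Complex.dist_eq, sub_zero] at h2
    rw [hKeq]
    exact isCompact_univ_pi fun _ => isCompact_univ_pi fun _ => isCompact_closedBall _ _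
  exact hK.of_isClosed_subset hclosed hsub

/-- Theorem: a local minimizer `U⋆` of `J` on the unit Frobenius sphere yields a
local minimizer `ρ⋆ = U⋆ U⋆ᴴ` of `L` on the set of density matrices of rank at
most `r`. -/
theorem bm_local_min_transfer {d m : ℕ} (r : ℕ) (hr : 1 ≤ r) (hrd : r ≤ d)
    (hm : 1 ≤ m)
    (A : Fin m → Matrix (Fin d) (Fin d) ℂ) (f : Fin m → ℝ)
    (hA : ∀ i, (A i).PosSemidef) (hf : ∀ i, 0 ≤ f i)
    (Ustar : Matrix (Fin d) (Fin r) ℂ)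
    (hnorm : ((Ustarᴴ * Ustar).trace).re = 1)
    (hpos : ∀ i, 0 < f i → 0 < ((Ustarᴴ * A i * Ustar).trace).re)
    (hloc : IsLocalMinOn (facObj A f)
      {U : Matrix (Fin d) (Fin r) ℂ | ((Uᴴ * U).trace).re = 1} Ustar) :
    IsLocalMinOn (negLogLik A f)
      {ρ : Matrix (Fin d) (Fin d) ℂ | ρ.PosSemidef ∧ ρ.trace = 1 ∧ ρ.rank ≤ r}
      (Ustar * Ustarᴴ) := by
  classical
  set Sph : Set (Matrix (Fin d) (Fin r) ℂ) := {U | ((Uᴴ * U).trace).re = 1} with hSphdef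
  have htr_inv : ∀ (W : Matrix (Fin r) (Fin r) ℂ), W * Wᴴ = 1 →
      ∀ (M : Matrix (Fin d) (Fin d) ℂ) (X : Matrix (Fin d) (Fin r) ℂ),
      ((X * W)ᴴ * M * (X * W)).trace = (Xᴴ * M * X).trace := by
    intro W hW M X
    calc ((X * W)ᴴ * M * (X * W)).trace
        = (Wᴴ * ((Xᴴ * M * X) * W)).trace := by
          rw [Matrix.conjTranspose_mul]; congr 1; simp only [Matrix.mul_assoc]
      _ = (((Xᴴ * M * X) * W) * Wᴴ).trace := Matrix.trace_mul_comm _ _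
      _ = ((Xᴴ * M * X) * (W * Wᴴ)).trace := by rw [Matrix.mul_assoc]
      _ = (Xᴴ * M * X).trace := by rw [hW, Matrix.mul_one]
  have hJ_inv : ∀ (W : Matrix (Fin r) (Fin r) ℂ), W * Wᴴ = 1 →
      ∀ X : Matrix (Fin d) (Fin r) ℂ, facObj A f (X * W) = facObj A f X := by
    intro W hW X
    unfold facObj
    congr 1
    apply Finset.sum_congr rfl
    intro i _
    rw [htr_inv W hW (A i) X]
  have hSph_inv : ∀ (W : Matrix (Fin r) (Fin r) ℂ), W * Wᴴ = 1 →
      ∀ X, X ∈ Sph → X * W ∈ Sph := by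
    intro W hW X hX
    have h2 := htr_inv W hW 1 X
    rw [Matrix.mul_one, Matrix.mul_one] at h2
    show (((X * W)ᴴ * (X * W)).trace).re = 1
    rw [h2]
    exact hX
  have hlocW : ∀ W ∈ Matrix.unitaryGroup (Fin r) ℂ,
      IsLocalMinOn (facObj A f) Sph (Ustar * W) := by
    intro W hWmem
    have hW1 : W * Wᴴ = 1 := by
      have h0 := Matrix.mem_unitaryGroup_iff.mp hWmem
      rwa [Matrix.star_eq_conjTranspose] at h0
    have hW2 : Wᴴ * W = 1 := by
      have h0 := Matrix.mem_unitaryGroup_iff'.mp hWmem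
      rwa [Matrix.star_eq_conjTranspose] at h0
    have hW3 : Wᴴ * Wᴴᴴ = 1 := by rwa [Matrix.conjTranspose_conjTranspose]
    have hcont : Continuous fun X : Matrix (Fin d) (Fin r) ℂ => X * Wᴴ :=
      continuous_id.matrix_mul continuous_const
    have hmaps : Set.MapsTo (fun X : Matrix (Fin d) (Fin r) ℂ => X * Wᴴ) Sph Sph :=
      fun X hX => hSph_inv Wᴴ hW3 X hX
    have hfix : (Ustar * W) * Wᴴ = Ustar := by rw [Matrix.mul_assoc, hW1, Matrix.mul_one]
    have htend : Filter.Tendsto (fun X : Matrix (Fin d) (Fin r) ℂ => X * Wᴴ)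
        (nhdsWithin (Ustar * W) Sph) (nhdsWithin Ustar Sph) := by
      have h4 := (hcont.continuousWithinAt (s := Sph) (x := Ustar * W)).tendsto_nhdsWithin hmaps
      rwa [hfix] at h4
    have hev := htend.eventually
      (hloc : ∀ᶠ y in nhdsWithin Ustar Sph, facObj A f Ustar ≤ facObj A f y)
    show ∀ᶠ X in nhdsWithin (Ustar * W) Sph, facObj A f (Ustar * W) ≤ facObj A f X
    refine hev.mono fun X hX => ?_
    rw [hJ_inv Wᴴ hW3 X] at hX
    rwa [hJ_inv W hW1 Ustar]
  set Bad : Set (Matrix (Fin d) (Fin r) ℂ) :=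
    {X | X ∈ Sph ∧ facObj A f X < facObj A f Ustar} with hBaddef
  have hBadSub : Bad ⊆ Sph := fun X hX => hX.1
  have hSphClosed : IsClosed Sph := by
    apply isClosed_eq ?_ continuous_const
    exact Complex.continuous_re.comp
      (((continuous_id.matrix_conjTranspose).matrix_mul continuous_id).matrix_trace)
  have hC : IsCompact (closure Bad) :=
    sph_compact.of_isClosed_subset isClosed_closure (closure_minimal hBadSub hSphClosed)
  have hφcont : Continuous fun X : Matrix (Fin d) (Fin r) ℂ => X * Xᴴ :=
    continuous_id.matrix_mul continuous_id.matrix_conjTranspose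
  have himg : IsCompact ((fun X : Matrix (Fin d) (Fin r) ℂ => X * Xᴴ) '' closure Bad) :=
    hC.image hφcont
  have hnotmem : Ustar * Ustarᴴ ∉ (fun X : Matrix (Fin d) (Fin r) ℂ => X * Xᴴ) '' closure Bad := by
    rintro ⟨V, hVC, hVeq⟩
    obtain ⟨W, hWmem, rfl⟩ := fiber_factor Ustar V hVeq
    have hW1 : W * Wᴴ = 1 := by
      have h0 := Matrix.mem_unitaryGroup_iff.mp hWmem
      rwa [Matrix.star_eq_conjTranspose] at h0
    have hmin := hlocW W hWmem
    have hne : (nhdsWithin (Ustar * W) Bad).NeBot := mem_closure_iff_nhdsWithin_neBot.mp hVC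
    have h2 : ∀ᶠ X in nhdsWithin (Ustar * W) Bad, facObj A f (Ustar * W) ≤ facObj A f X :=
      hmin.filter_mono (nhdsWithin_mono _ hBadSub)
    obtain ⟨X, hXle, hXB⟩ :=
      (h2.and (self_mem_nhdsWithin : ∀ᶠ X in nhdsWithin (Ustar * W) Bad, X ∈ Bad)).exists
    have heq : facObj A f (Ustar * W) = facObj A f Ustar := hJ_inv W hW1 Ustar
    have hlt : facObj A f X < facObj A f Ustar := hXB.2
    rw [heq] at hXle
    exact absurd hXle (not_le.mpr hlt)
  have hmemnhds : ((fun X : Matrix (Fin d) (Fin r) ℂ => X * Xᴴ) '' closure Bad)ᶜ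
      ∈ nhds (Ustar * Ustarᴴ) := (himg.isClosed.isOpen_compl).mem_nhds hnotmem
  show ∀ᶠ ρ in nhdsWithin (Ustar * Ustarᴴ)
      {ρ : Matrix (Fin d) (Fin d) ℂ | ρ.PosSemidef ∧ ρ.trace = 1 ∧ ρ.rank ≤ r},
    negLogLik A f (Ustar * Ustarᴴ) ≤ negLogLik A f ρ
  filter_upwards [nhdsWithin_le_nhds hmemnhds, self_mem_nhdsWithin] with ρ hρM hρS
  obtain ⟨hPSD, htr1, hrk⟩ := hρS
  obtain ⟨V, hVfac⟩ := exists_factor ρ hPSD hrk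
  have hVS : V ∈ Sph := by
    show ((Vᴴ * V).trace).re = 1
    rw [Matrix.trace_mul_comm, ← hVfac, htr1, Complex.one_re]
  have hVnot : V ∉ closure Bad := fun hmem => hρM ⟨V, hmem, hVfac.symm⟩
  have hge : facObj A f Ustar ≤ facObj A f V := by
    by_contra hlt
    push_neg at hlt
    exact hVnot (subset_closure ⟨hVS, hlt⟩)
  rw [hVfac, negLogLik_factor, negLogLik_factor]
  exact hge
end

section
/- Theorem 1 (Burer–Monteiro local minimality transfer, real symmetric case): Let F and h be continuous real-valued functions on the space of d × d real matrices, and fix r with 1 ≤ r ≤ d. Let U⋆ be a d × r real matrix with h(U⋆ U⋆ᵀ) = 0, and set ρ⋆ = U⋆ U⋆ᵀ. Then ρ⋆ is a local minimizer of F on the set {ρ : ρ symmetric positive semidefinite, h(ρ) = 0, rank(ρ) ≤ r} if and only if U⋆ is a local minimizer of the map U ↦ F(U Uᵀ) on the set {U ∈ ℝ^{d×r} : h(U Uᵀ) = 0}. -/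
open Matrix BigOperators
open scoped InnerProductSpace

attribute [local instance] Matrix.normedAddCommGroup Matrix.normedSpace

lemma bm_factor_transfer {d r : ℕ} (A B : Matrix (Fin d) (Fin r) ℝ)
    (hAB : A * Aᵀ = B * Bᵀ) :
    ∃ Q : Matrix (Fin r) (Fin r) ℝ, Q * Qᵀ = 1 ∧ A = B * Q := by
  classical
  set T := Matrix.toEuclideanLin Aᵀ with hT
  set S := Matrix.toEuclideanLin Bᵀ with hS
  have inner_eq : ∀ (C : Matrix (Fin d) (Fin r) ℝ) (x y : EuclideanSpace ℝ (Fin d)),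
      ⟪Matrix.toEuclideanLin Cᵀ x, Matrix.toEuclideanLin Cᵀ y⟫_ℝ
        = (WithLp.equiv 2 _ x) ⬝ᵥ ((C * Cᵀ) *ᵥ (WithLp.equiv 2 _ y)) := by
    intro C x y
    rw [PiLp.inner_apply]
    simp only [RCLike.inner_apply, conj_trivial]
    calc (∑ k, (Matrix.toEuclideanLin Cᵀ y) k * (Matrix.toEuclideanLin Cᵀ x) k)
        = (Cᵀ *ᵥ (WithLp.equiv 2 _ x)) ⬝ᵥ (Cᵀ *ᵥ (WithLp.equiv 2 _ y)) := by
            rw [dotProduct_comm]; rfl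
      _ = ((WithLp.equiv 2 _ x) ᵥ* C) ⬝ᵥ (Cᵀ *ᵥ (WithLp.equiv 2 _ y)) := by
            rw [Matrix.mulVec_transpose]
      _ = (WithLp.equiv 2 _ x) ⬝ᵥ ((C * Cᵀ) *ᵥ (WithLp.equiv 2 _ y)) := by
            rw [Matrix.dotProduct_mulVec, Matrix.dotProduct_mulVec, Matrix.vecMul_vecMul]
  have key : ∀ x y : EuclideanSpace ℝ (Fin d), ⟪T x, T y⟫_ℝ = ⟪S x, S y⟫_ℝ := by
    intro x y
    rw [hT, hS, inner_eq, inner_eq, hAB]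
  have hle : LinearMap.ker S ≤ LinearMap.ker T := by
    intro x hx
    rw [LinearMap.mem_ker] at hx ⊢
    have h1 : ⟪T x, T x⟫_ℝ = 0 := by rw [key x x, hx, inner_zero_right]
    exact inner_self_eq_zero.mp h1
  have hnorm : ∀ x : EuclideanSpace ℝ (Fin d), ‖T x‖ = ‖S x‖ := by
    intro x
    rw [← sq_eq_sq₀ (norm_nonneg _) (norm_nonneg _), ← real_inner_self_eq_norm_sq,
      ← real_inner_self_eq_norm_sq, key]
  -- the partial isometry on the range of S
  let L0 : LinearMap.range S →ₗ[ℝ] EuclideanSpace ℝ (Fin r) :=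
    ((LinearMap.ker S).liftQ T hle) ∘ₗ (S.quotKerEquivRange.symm : _ →ₗ[ℝ] _)
  have hL0 : ∀ x : EuclideanSpace ℝ (Fin d),
      L0 ⟨S x, LinearMap.mem_range_self S x⟩ = T x := by
    intro x
    have h1 : S.quotKerEquivRange (Submodule.Quotient.mk x)
        = ⟨S x, LinearMap.mem_range_self S x⟩ := by
      exact Subtype.ext (LinearMap.quotKerEquivRange_apply_mk S x)
    have h2 : (S.quotKerEquivRange.symm ⟨S x, LinearMap.mem_range_self S x⟩)
        = Submodule.Quotient.mk x := by
      rw [← h1, LinearEquiv.symm_apply_apply]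
    show ((LinearMap.ker S).liftQ T hle) (S.quotKerEquivRange.symm ⟨S x, _⟩) = T x
    rw [h2, Submodule.liftQ_apply]
  let L : LinearMap.range S →ₗᵢ[ℝ] EuclideanSpace ℝ (Fin r) :=
    { toLinearMap := L0
      norm_map' := by
        rintro ⟨-, x, rfl⟩
        rw [hL0 x]
        rw [hnorm x]
        rfl }
  let f := L.extend
  have hf : ∀ x : EuclideanSpace ℝ (Fin d), f (S x) = T x := by
    intro x
    have := L.extend_apply ⟨S x, LinearMap.mem_range_self S x⟩
    rw [this]
    exact hL0 x
  set M := Matrix.toEuclideanLin.symm f.toLinearMap with hMdef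
  have hM : ∀ v, Matrix.toEuclideanLin M v = f v := by
    intro v
    rw [hMdef, LinearEquiv.apply_symm_apply]
    rfl
  have hmul : ∀ (P : Matrix (Fin r) (Fin r) ℝ) (N : Matrix (Fin r) (Fin d) ℝ)
      (v : EuclideanSpace ℝ (Fin d)),
      Matrix.toEuclideanLin (P * N) v = Matrix.toEuclideanLin P (Matrix.toEuclideanLin N v) := by
    intro P N v
    simp [Matrix.toEuclideanLin_apply, Matrix.mulVec_mulVec]
  have hMB : M * Bᵀ = Aᵀ := by
    apply Matrix.toEuclideanLin.injective
    apply LinearMap.ext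
    intro v
    rw [hmul, hM]
    exact hf v
  have hent : ∀ (i k : Fin r), (f (EuclideanSpace.single i 1)) k = M k i := by
    intro i k
    rw [← hM]
    rw [Matrix.toEuclideanLin_apply]
    show (M *ᵥ (WithLp.equiv 2 _) (EuclideanSpace.single i 1)) k = M k i
    rw [WithLp.equiv_apply, EuclideanSpace.ofLp_single, Matrix.mulVec_single]
    simp
  have hMtM : Mᵀ * M = 1 := by
    ext i j
    have h1 : ⟪f (EuclideanSpace.single i 1), f (EuclideanSpace.single j 1)⟫_ℝ
        = ⟪(EuclideanSpace.single i (1:ℝ)), EuclideanSpace.single j 1⟫_ℝ :=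
      f.inner_map_map _ _
    rw [PiLp.inner_apply] at h1
    simp only [RCLike.inner_apply, conj_trivial, hent] at h1
    have h2 : (Mᵀ * M) i j = ∑ k, M k i * M k j := by
      simp [Matrix.mul_apply, Matrix.transpose_apply]
    rw [h2, Finset.sum_congr rfl fun k _ => mul_comm (M k i) (M k j), h1]
    rw [Matrix.one_apply]
    rcases eq_or_ne i j with rfl | hij
    · simp [EuclideanSpace.inner_single_left, EuclideanSpace.single_apply]
    · simp [EuclideanSpace.inner_single_left, EuclideanSpace.single_apply, hij, Ne.symm hij]
  refine ⟨Mᵀ, ?_, ?_⟩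
  · rw [Matrix.transpose_transpose]
    exact hMtM
  · have := congrArg Matrix.transpose hMB
    rw [Matrix.transpose_mul, Matrix.transpose_transpose, Matrix.transpose_transpose] at this
    exact this.symm

lemma bm_psd_factor {d r : ℕ} (ρ : Matrix (Fin d) (Fin d) ℝ)
    (hρ : ρ.PosSemidef) (hrank : ρ.rank ≤ r) :
    ∃ U : Matrix (Fin d) (Fin r) ℝ, ρ = U * Uᵀ := by
  classical
  have hH := hρ.1
  have hcard : Fintype.card {i // hH.eigenvalues i ≠ 0} ≤ Fintype.card (Fin r) := by
    rw [Fintype.card_fin]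
    exact hH.rank_eq_card_non_zero_eigs ▸ hrank
  obtain ⟨e⟩ := Function.Embedding.nonempty_of_card_le hcard
  set lam := hH.eigenvalues with hlam
  let B : Matrix (Fin d) (Fin r) ℝ := fun i k =>
    if h : lam i ≠ 0 then (if e ⟨i, h⟩ = k then Real.sqrt (lam i) else 0) else 0
  have hBB : B * Bᵀ = Matrix.diagonal lam := by
    ext i j
    rw [Matrix.mul_apply, Matrix.diagonal_apply]
    rcases eq_or_ne i j with rfl | hij
    · rw [if_pos rfl]
      by_cases h : lam i ≠ 0
      · have : ∀ k, B i k * Bᵀ k i = if e ⟨i, h⟩ = k then lam i else 0 := by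
          intro k
          simp only [B, Matrix.transpose_apply, dif_pos h]
          rcases eq_or_ne (e ⟨i, h⟩) k with hk | hk
          · simp [hk, Real.mul_self_sqrt (hρ.eigenvalues_nonneg i), Matrix.transpose, h]
            exact Real.mul_self_sqrt (hρ.eigenvalues_nonneg i)
          · simp [hk]
        rw [Finset.sum_congr rfl fun k _ => this k, Finset.sum_ite_eq]
        simp
      · push_neg at h
        simp [B, h]
    · rw [if_neg hij]
      apply Finset.sum_eq_zero
      intro k _
      simp only [Matrix.transpose_apply]
      by_cases hi : lam i ≠ 0
      · by_cases hj : lam j ≠ 0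
        · simp only [B, dif_pos hi, dif_pos hj]
          rcases eq_or_ne (e ⟨i, hi⟩) k with hik | hik
          · rcases eq_or_ne (e ⟨j, hj⟩) k with hjk | hjk
            · exact absurd (congrArg Subtype.val (e.injective (hik.trans hjk.symm))) hij
            · simp [hjk]
          · simp [hik]
        · have hz : B j k = 0 := dif_neg hj
          rw [hz, mul_zero]
      · have hz : B i k = 0 := dif_neg hi
        rw [hz, zero_mul]
  set P : Matrix (Fin d) (Fin d) ℝ := (hH.eigenvectorUnitary : Matrix (Fin d) (Fin d) ℝ) with hP
  refine ⟨P * B, ?_⟩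
  have hspec := hH.spectral_theorem
  have hofReal : (RCLike.ofReal ∘ lam : Fin d → ℝ) = lam := by
    funext i; simp
  have key : (P * B) * (P * B)ᵀ = P * Matrix.diagonal lam * Pᵀ := by
    rw [Matrix.transpose_mul, Matrix.mul_assoc P B, ← Matrix.mul_assoc B, hBB,
      ← Matrix.mul_assoc]
  rw [key]
  calc ρ = P * Matrix.diagonal (RCLike.ofReal ∘ lam) * star P := hspec
    _ = P * Matrix.diagonal lam * Pᵀ := by
        rw [hofReal, Matrix.star_eq_conjTranspose, Matrix.conjTranspose_eq_transpose_of_trivial]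

/-- Theorem (Burer–Monteiro local minimality transfer, real symmetric case):
for continuous `F, h`, with `ρ⋆ = U⋆ U⋆ᵀ` and `h(ρ⋆) = 0`, the point `ρ⋆` is a
local minimizer of `F` on `{ρ : ρ symmetric PSD, h(ρ) = 0, rank ρ ≤ r}` iff `U⋆`
is a local minimizer of `U ↦ F(U Uᵀ)` on `{U : h(U Uᵀ) = 0}`. -/
theorem bm_local_min_iff_real {d r : ℕ} (hr : 1 ≤ r) (hrd : r ≤ d)
    (F h : Matrix (Fin d) (Fin d) ℝ → ℝ)
    (hF : Continuous F) (hh : Continuous h)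
    (Ustar : Matrix (Fin d) (Fin r) ℝ)
    (hUstar : h (Ustar * Ustarᵀ) = 0) :
    IsLocalMinOn F
        {ρ : Matrix (Fin d) (Fin d) ℝ | ρ.PosSemidef ∧ h ρ = 0 ∧ ρ.rank ≤ r}
        (Ustar * Ustarᵀ)
      ↔
    IsLocalMinOn (fun U : Matrix (Fin d) (Fin r) ℝ => F (U * Uᵀ))
        {U : Matrix (Fin d) (Fin r) ℝ | h (U * Uᵀ) = 0} Ustar := by
  classical
  set Sρ : Set (Matrix (Fin d) (Fin d) ℝ) :=
    {ρ | ρ.PosSemidef ∧ h ρ = 0 ∧ ρ.rank ≤ r} with hSρ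
  set SU : Set (Matrix (Fin d) (Fin r) ℝ) := {U | h (U * Uᵀ) = 0} with hSU
  constructor
  · -- easy direction: push forward along U ↦ U Uᵀ
    intro hmin
    have hcont : ContinuousWithinAt (fun U : Matrix (Fin d) (Fin r) ℝ => U * Uᵀ) SU Ustar :=
      (continuous_id.matrix_mul continuous_id.matrix_transpose).continuousWithinAt
    have hmaps : Set.MapsTo (fun U : Matrix (Fin d) (Fin r) ℝ => U * Uᵀ) SU Sρ := by
      intro U hU
      refine ⟨?_, hU, ?_⟩
      · have := Matrix.posSemidef_self_mul_conjTranspose U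
        rwa [Matrix.conjTranspose_eq_transpose_of_trivial] at this
      · refine le_trans (Matrix.rank_mul_le_left U Uᵀ) ?_
        simpa using Matrix.rank_le_card_width U
    have ht : Filter.Tendsto (fun U : Matrix (Fin d) (Fin r) ℝ => U * Uᵀ)
        (nhdsWithin Ustar SU) (nhdsWithin (Ustar * Ustarᵀ) Sρ) :=
      hcont.tendsto_nhdsWithin hmaps
    exact ht.eventually hmin
  · -- hard direction
    intro hmin
    by_contra hnot
    have hfreq : ∃ᶠ ρ in nhdsWithin (Ustar * Ustarᵀ) Sρ, ¬ (F (Ustar * Ustarᵀ) ≤ F ρ) :=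
      Filter.not_eventually.mp hnot
    have hmem : ∀ᶠ ρ in nhdsWithin (Ustar * Ustarᵀ) Sρ, ρ ∈ Sρ := self_mem_nhdsWithin
    have hfreq2 : ∃ᶠ ρ in nhdsWithin (Ustar * Ustarᵀ) Sρ,
        ρ ∈ Sρ ∧ ¬ (F (Ustar * Ustarᵀ) ≤ F ρ) := hmem.and_frequently hfreq
    haveI : FirstCountableTopology (Matrix (Fin d) (Fin d) ℝ) :=
      inferInstanceAs (FirstCountableTopology (Fin d → Fin d → ℝ))
    obtain ⟨u, hu_t, hu_p⟩ := Filter.exists_seq_forall_of_frequently hfreq2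
    have hu_nhds : Filter.Tendsto u Filter.atTop (nhds (Ustar * Ustarᵀ)) :=
      hu_t.mono_right nhdsWithin_le_nhds
    choose V hV using fun n => bm_psd_factor (u n) (hu_p n).1.1 (hu_p n).1.2.2
    -- the factors V n are bounded
    have hbddA : BddAbove (Set.range fun n => ‖u n‖) :=
      (hu_nhds.norm).bddAbove_range
    obtain ⟨C, hC⟩ := hbddA
    have hCn : ∀ n, ‖u n‖ ≤ C := fun n => hC (Set.mem_range_self n)
    have hsq : ∀ n (i : Fin d) (k : Fin r), (V n i k) ^ 2 ≤ C := by
      intro n i k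
      have h1 : (V n i k) ^ 2 ≤ ∑ k', V n i k' * V n i k' := by
        rw [sq]
        exact Finset.single_le_sum (f := fun k' => V n i k' * V n i k')
          (fun k' _ => mul_self_nonneg _) (Finset.mem_univ k)
      have h2 : (∑ k', V n i k' * V n i k') = u n i i := by
        rw [hV n, Matrix.mul_apply]
        rfl
      have h3 : u n i i ≤ ‖u n‖ :=
        le_trans (le_abs_self _)
          (by simpa [Real.norm_eq_abs] using Matrix.norm_entry_le_entrywise_sup_norm (u n) (i := i) (j := i))
      calc (V n i k) ^ 2 ≤ u n i i := h1.trans (le_of_eq h2)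
        _ ≤ ‖u n‖ := h3
        _ ≤ C := hCn n
    have hVnorm : ∀ n, ‖V n‖ ≤ Real.sqrt C := by
      intro n
      rw [Matrix.norm_def, pi_norm_le_iff_of_nonneg (Real.sqrt_nonneg _)]
      intro i
      rw [pi_norm_le_iff_of_nonneg (Real.sqrt_nonneg _)]
      intro k
      rw [Real.norm_eq_abs, ← Real.sqrt_sq_eq_abs]
      exact Real.sqrt_le_sqrt (hsq n i k)
    have hVmem : ∀ n, V n ∈ Metric.closedBall (0 : Matrix (Fin d) (Fin r) ℝ) (Real.sqrt C) := by
      intro n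
      rw [Metric.mem_closedBall, dist_zero_right]
      exact hVnorm n
    obtain ⟨W, -, φ, hφ, hWt⟩ :=
      tendsto_subseq_of_bounded Metric.isBounded_closedBall hVmem
    -- the limit W is a factor of ρ⋆
    have hprod : Filter.Tendsto (fun n => V (φ n) * (V (φ n))ᵀ) Filter.atTop
        (nhds (W * Wᵀ)) := by
      have : Continuous (fun X : Matrix (Fin d) (Fin r) ℝ => X * Xᵀ) :=
        continuous_id.matrix_mul continuous_id.matrix_transpose
      exact (this.tendsto W).comp hWt
    have hprod2 : Filter.Tendsto (fun n => V (φ n) * (V (φ n))ᵀ) Filter.atTop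
        (nhds (Ustar * Ustarᵀ)) := by
      have : (fun n => V (φ n) * (V (φ n))ᵀ) = fun n => u (φ n) := by
        funext n; rw [← hV (φ n)]
      rw [this]
      exact hu_nhds.comp hφ.tendsto_atTop
    have hWW : Ustar * Ustarᵀ = W * Wᵀ := tendsto_nhds_unique hprod2 hprod
    obtain ⟨Q, hQ, hUQ⟩ := bm_factor_transfer Ustar W hWW
    -- the corrected sequence of factors
    set Wn : ℕ → Matrix (Fin d) (Fin r) ℝ := fun n => V (φ n) * Q with hWn
    have hWnfac : ∀ n, Wn n * (Wn n)ᵀ = u (φ n) := by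
      intro n
      rw [hWn]
      show (V (φ n) * Q) * (V (φ n) * Q)ᵀ = u (φ n)
      rw [Matrix.transpose_mul, Matrix.mul_assoc, ← Matrix.mul_assoc Q, hQ, Matrix.one_mul,
        ← hV (φ n)]
    have hWn_t : Filter.Tendsto Wn Filter.atTop (nhds Ustar) := by
      have hcont : Continuous (fun X : Matrix (Fin d) (Fin r) ℝ => X * Q) :=
        continuous_id.matrix_mul continuous_const
      have := (hcont.tendsto W).comp hWt
      rw [hUQ]
      exact this
    have hWn_mem : ∀ n, Wn n ∈ SU := by
      intro n
      show h (Wn n * (Wn n)ᵀ) = 0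
      rw [hWnfac n]
      exact (hu_p (φ n)).1.2.1
    have hWn_tw : Filter.Tendsto Wn Filter.atTop (nhdsWithin Ustar SU) :=
      tendsto_nhdsWithin_of_tendsto_nhds_of_eventually_within _ hWn_t
        (Filter.Eventually.of_forall hWn_mem)
    have hev := hWn_tw.eventually hmin
    obtain ⟨n, hn⟩ := hev.exists
    have hlt := (hu_p (φ n)).2
    apply hlt
    have : F (Wn n * (Wn n)ᵀ) = F (u (φ n)) := by rw [hWnfac n]
    simpa [this] using hn
end
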